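/- (Variance decomposition for influence functions.) Let 𝓗 = L²₀(P) be the space of mean-zero square-integrable p-vectors, Λ ⊂ 𝓗 a closed linear subspace (nuisance tangent space), and S_ψ ∈ 𝓗. If every influence function Φ of a regular asymptotically linear estimator satisfies Φ ∈ Λ⊥ and E[Φ S_ψᵀ] = I_p, then the efficient influence function Φ_eff = [E(S_eff S_effᵀ)]⁻¹ S_eff with S_eff = Π(S_ψ | Λ⊥) has the smallest variance: for any such Φ, Var(Φ) − Var(Φ_eff) = Var(Φ − Φ_eff) is positive semidefinite. -/

import Mathlib

open scoped RealInnerProductSpace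
/-- Variance decomposition for influence functions, scalar version in an
abstract Hilbert space: with `Λ` the nuisance tangent space (closed subspace), any
influence function `Φ ∈ Λ⊥` normalized by `⟨Φ, S_ψ⟩ = 1`, efficient score
`S_eff = Π(S_ψ | Λ⊥)` and efficient influence function
`Φ_eff = ⟨S_eff, S_eff⟩⁻¹ S_eff`, the variance decomposes as
`‖Φ‖² = ‖Φ_eff‖² + ‖Φ − Φ_eff‖²`, so `Φ_eff` has the smallest variance. -/
theorem stmt13
    {H : Type*} [NormedAddCommGroup H] [InnerProductSpace ℝ H] [CompleteSpace H]
    (Λ : Submodule ℝ H) (hΛ : IsClosed (Λ : Set H)) [Submodule.HasOrthogonalProjection Λᗮ]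
    (Sψ Φ : H) (hΦ : Φ ∈ Λᗮ) (hΦS : ⟪Φ, Sψ⟫ = 1)
    (Seff : H) (hSeff : Seff = (Submodule.orthogonalProjectionOnto Λᗮ Sψ : H))
    (hS0 : ⟪Seff, Seff⟫ ≠ 0)
    (Φeff : H) (hΦeff : Φeff = (⟪Seff, Seff⟫)⁻¹ • Seff) :
    ‖Φ‖ ^ 2 = ‖Φeff‖ ^ 2 + ‖Φ - Φeff‖ ^ 2 := by
  have hmem : Sψ - Seff ∈ Λᗮᗮ := by
    rw [hSeff]; exact Submodule.sub_starProjection_mem_orthogonal (K := Λᗮ) Sψ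
  have h1 : ⟪Φ, Sψ - Seff⟫ = 0 := hmem Φ hΦ
  have h2 : ⟪Φ, Seff⟫ = 1 := by
    have := inner_sub_right (𝕜 := ℝ) Φ Sψ Seff
    rw [h1, hΦS] at this; linarith
  have horth : ⟪Φeff, Φ - Φeff⟫ = 0 := by
    have h3 : ⟪Seff, Φ⟫ = (1:ℝ) := by rw [real_inner_comm]; exact h2
    rw [hΦeff, inner_sub_right, real_inner_smul_left, real_inner_smul_right,
      real_inner_smul_left, h3]
    field_simp
    simp
  have := norm_add_sq_real Φeff (Φ - Φeff)
  rw [horth] at this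
  simp only [add_sub_cancel] at this
  linarith
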